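/- There exists a numerical constant C₂ > 0 such that for every positive integer N, every r, r_j ∈ [0,1]^2, and all m,m',n,n' ∈ {0,1}, the Frobenius norm satisfies ‖R^{(m',n')}_{(m,n)}(r,r_j)‖_F ≤ (C₂/√L)·(2πN)^{m+m'+n+n'}. -/

import Mathlib

open MeasureTheory ProbabilityTheory Matrix

noncomputable section

namespace Blind2D

/-- `L = 2N+1` as a real number. -/
def Lr (N : ℕ) : ℝ := 2 * N + 1

/-- Index set `{-N, …, N}` encoded as `Fin (2N+1)`. -/
abbrev Idx (N : ℕ) := Fin (2 * N + 1)

/-- the integer in `{-N,…,N}` corresponding to an index. -/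
def toZ (N : ℕ) (i : Idx N) : ℤ := (i : ℤ) - (N : ℤ)

/-- the real number corresponding to an index. -/
def tv (N : ℕ) (i : Idx N) : ℝ := (toZ N i : ℝ)

/-- `e^{i 2π x}` for real `x`. -/
def e2 (x : ℝ) : ℂ := Complex.exp (Complex.I * (2 * Real.pi * x))

/-- `q`-th derivative of the Dirichlet kernel `D_N`. -/
def dirichletD (N : ℕ) (q : ℕ) (t : ℝ) : ℂ :=
  (Lr N : ℂ)⁻¹ * ∑ r : Idx N, (Complex.I * (2 * Real.pi * tv N r)) ^ q * e2 (t * tv N r)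

/-- the Dirichlet kernel `D_N(t) = (1/L) ∑_{r=-N}^N e^{i2πtr}`. -/
def dirichlet (N : ℕ) (t : ℝ) : ℂ := dirichletD N 0 t

/-- partial derivative `∂_τ^{m'} ∂_f^{n'}` of the atom `a(r)`,
entry `(k,l)`:  `(-1)^{m'+n'} D_N^{(m')}(l/L - τ) D_N^{(n')}(k/L - f)`. -/
def atomD (N : ℕ) (m' n' : ℕ) (r : ℝ × ℝ) : Idx N × Idx N → ℂ :=
  fun kl => (-1 : ℂ) ^ (m' + n') *
    dirichletD N m' (tv N kl.2 / Lr N - r.1) * dirichletD N n' (tv N kl.1 / Lr N - r.2)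

/-- the atom `a(r)`, with `[a(r)]_{(k,l)} = D_N(l/L-τ) D_N(k/L-f)`. -/
def atom (N : ℕ) (r : ℝ × ℝ) : Idx N × Idx N → ℂ := atomD N 0 0 r

/-- the matrix `D̃_p`, with row `(k,l)` equal to `e^{i2πpk/L} d_{p-l}^H`. -/
def Dtil (N K : ℕ) (d : ℤ → Fin K → ℂ) (p : Idx N) :
    Matrix (Idx N × Idx N) (Fin K) ℂ :=
  Matrix.of fun kl j => e2 (tv N p * tv N kl.1 / Lr N) * star (d (toZ N p - toZ N kl.2) j)

/-- the `i`-th column `d̂_i` of `D = [d_{-N},…,d_N]^H`. -/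
def dhat (N K : ℕ) (d : ℤ → Fin K → ℂ) (i : Fin K) : Idx N → ℂ :=
  fun l => star (d (toZ N l) i)

/-- `L`-periodicity of the family `d`. -/
def Periodic (N : ℕ) {K : ℕ} (d : ℤ → Fin K → ℂ) : Prop :=
  ∀ l : ℤ, d (l + (2 * N + 1 : ℤ)) = d l

/-- Euclidean (`ℓ²`) norm of a finite complex vector. -/
def enorm2 {ι : Type} [Fintype ι] (v : ι → ℂ) : ℝ := Real.sqrt (∑ i, ‖v i‖ ^ 2)

/-- spectral norm (operator norm with respect to Euclidean norms). -/
def specNorm {ι κ : Type} [Fintype ι] [Fintype κ] (A : Matrix ι κ ℂ) : ℝ :=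
  sSup {x : ℝ | ∃ v : κ → ℂ, enorm2 v ≤ 1 ∧ x = enorm2 (A.mulVec v)}

/-- Frobenius norm. -/
def frobNorm {ι κ : Type} [Fintype ι] [Fintype κ] (A : Matrix ι κ ℂ) : ℝ :=
  Real.sqrt (∑ i, ∑ j, ‖A i j‖ ^ 2)

/-- the square `[0,1]²`. -/
def box : Set (ℝ × ℝ) := Set.Icc (0 : ℝ) 1 ×ˢ Set.Icc (0 : ℝ) 1

/-- `sign(c) = c / |c|`. -/
def csign (c : ℂ) : ℂ := c / ((‖c‖ : ℝ) : ℂ)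

/-- the rank-one atom `h a(r)^H`. -/
def outerAtom (N K : ℕ) (h : Fin K → ℂ) (r : ℝ × ℝ) :
    Matrix (Fin K) (Idx N × Idx N) ℂ :=
  Matrix.of fun i kl => h i * star (atom N r kl)

/-- the atomic norm `‖U‖_A`. -/
def atomicNorm (N K : ℕ) (U : Matrix (Fin K) (Idx N × Idx N) ℂ) : ℝ :=
  sInf {t : ℝ | ∃ (n : ℕ) (c : Fin n → ℂ) (rs : Fin n → ℝ × ℝ) (hs : Fin n → Fin K → ℂ),
    (∀ i, rs i ∈ box) ∧ (∀ i, enorm2 (hs i) = 1) ∧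
    U = ∑ i, c i • outerAtom N K (hs i) (rs i) ∧ t = ∑ i, ‖c i‖}

/-- the ground-truth matrix `U = ∑_j c_j h_j a(r_j)^H`. -/
def Umat (N K R : ℕ) (c : Fin R → ℂ) (h : Fin R → Fin K → ℂ) (rr : Fin R → ℝ × ℝ) :
    Matrix (Fin K) (Idx N × Idx N) ℂ :=
  ∑ j, c j • outerAtom N K (h j) (rr j)

/-- feasibility for problem `P₁`: `Ũ` has the same measurements as `U`. -/
def Feasible (N K : ℕ) (d : ℤ → Fin K → ℂ)
    (U Ut : Matrix (Fin K) (Idx N × Idx N) ℂ) : Prop :=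
  ∀ p : Idx N, (Dtil N K d p * Ut).trace = (Dtil N K d p * U).trace

/-- wrap-around distance on the unit circle. -/
def wrapDist (x y : ℝ) : ℝ := min (Int.fract (x - y)) (1 - Int.fract (x - y))

/-- wrap-around sup-distance on `[0,1)²`. -/
def wrapSup (r s : ℝ × ℝ) : ℝ := max (wrapDist r.1 s.1) (wrapDist r.2 s.2)

/-- the minimum-separation condition. -/
def MinSep (N R : ℕ) (rr : Fin R → ℝ × ℝ) : Prop :=
  Function.Injective rr ∧ ∀ j j', j ≠ j' → 2.38 / N ≤ wrapSup (rr j) (rr j')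

/-- `T = N/2 + 1`. -/
def Tnum (N : ℕ) : ℝ := (N : ℝ) / 2 + 1

/-- `T = N/2 + 1` as an integer. -/
def TnumZ (N : ℕ) : ℤ := (N : ℤ) / 2 + 1

/-- Fourier coefficients of the squared Fejér kernel. -/
def gcoef (N : ℕ) (n : ℤ) : ℝ :=
  (Tnum N)⁻¹ * ∑ l ∈ Finset.Icc (max (n - TnumZ N) (-TnumZ N)) (min (n + TnumZ N) (TnumZ N)),
    (1 - |(l : ℝ)| / Tnum N) * (1 - |(n : ℝ) - (l : ℝ)| / Tnum N)

/-- the squared Fejér kernel. -/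
def Fejer (N : ℕ) (t : ℝ) : ℝ :=
  (Real.sin (Tnum N * Real.pi * t) / (Tnum N * Real.sin (Real.pi * t))) ^ 4

/-- `a`-th derivative of the squared Fejér kernel. -/
def FejerD (N : ℕ) (a : ℕ) : ℝ → ℝ := iteratedDeriv a (Fejer N)

/-- `μ = √|F''(0)|`. -/
def mu (N : ℕ) : ℝ := Real.sqrt |FejerD N 2 0|

/-- the vector `z_p(r_j)_{(m,n)}`. -/
def zvec (N : ℕ) (m n : ℕ) (p : Idx N) (rj : ℝ × ℝ) : Idx N × Idx N → ℂ :=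
  fun kl =>
    (gcoef N (toZ N kl.1) : ℂ) * (Complex.I * (2 * Real.pi * tv N kl.1)) ^ m *
      ((gcoef N (toZ N p) : ℂ) * (Complex.I * (2 * Real.pi * tv N p)) ^ n) *
      e2 (tv N kl.1 * (tv N p + tv N kl.2) / Lr N) *
      e2 (-(tv N kl.1 * rj.1 + tv N p * rj.2))

/-- the random kernel matrix `M^{(m',n')}_{(m,n)}(r, r_j)` (with `m' = n' = 0` this is
`M_{(m,n)}(r,r_j) = (1/T²) ∑_p D̃_p^H a(r) z_p(r_j)_{(m,n)}^H D̃_p`, and the parameters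
`m', n'` give its partial derivatives in `r = (τ,f)`). -/
def Mker (N K : ℕ) (d : ℤ → Fin K → ℂ) (m n m' n' : ℕ) (r rj : ℝ × ℝ) :
    Matrix (Fin K) (Fin K) ℂ :=
  ((Tnum N : ℂ) ^ 2)⁻¹ •
    ∑ p : Idx N,
      Matrix.vecMulVec ((Dtil N K d p)ᴴ.mulVec (atomD N m' n' r))
        (Matrix.vecMul (star (zvec N m n p rj)) (Dtil N K d p))

/-- the deterministic matrix `R^{(m',n')}_{(m,n)}(r, r_j)`. -/
def Rmat (N : ℕ) (m n m' n' : ℕ) (r rj : ℝ × ℝ) : Matrix (Idx N) (Idx N) ℂ :=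
  Matrix.of fun l l' =>
    (Lr N : ℂ)⁻¹ * ∑ p : Idx N, ((Tnum N : ℂ) ^ 2)⁻¹ *
      ∑ k : Idx N, ∑ k' : Idx N,
        (gcoef N (toZ N k') : ℂ) * (-(Complex.I * (2 * Real.pi * tv N k'))) ^ m *
          (-(Complex.I * (2 * Real.pi * tv N k))) ^ m' *
          (gcoef N (toZ N p) : ℂ) * (-(Complex.I * (2 * Real.pi * tv N p))) ^ (n + n') *
          e2 (tv N k * (tv N p - tv N l) / Lr N) *
          e2 (-(tv N k' * (tv N p - tv N l') / Lr N)) *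
          e2 (-(tv N k * r.1 - tv N k' * rj.1)) *
          e2 (-(tv N p * (r.2 - rj.2)))

/-- derivative pairs indexing the three block rows/columns: `(0,0), (1,0), (0,1)`. -/
def mnF : Fin 3 → ℕ × ℕ := ![(0, 0), (1, 0), (0, 1)]

/-- block signs `+1, -1, -1`. -/
def sgnF : Fin 3 → ℂ := ![1, -1, -1]

/-- total derivative order of a block index. -/
def wtF (i : Fin 3) : ℕ := (mnF i).1 + (mnF i).2

/-- the `3RK × 3RK` interpolation matrix `E`. -/
def Emat (N K R : ℕ) (d : ℤ → Fin K → ℂ) (rr : Fin R → ℝ × ℝ) :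
    Matrix (Fin 3 × Fin R × Fin K) (Fin 3 × Fin R × Fin K) ℂ :=
  Matrix.of fun a b =>
    sgnF a.1 * ((mu N : ℂ) ^ (wtF a.1 + wtF b.1))⁻¹ *
      Mker N K d (mnF b.1).1 (mnF b.1).2 (mnF a.1).1 (mnF a.1).2 (rr a.2.1) (rr b.2.1)
        a.2.2 b.2.2

/-- `M̄^{(a,b)}(r) = F^{(a)}(τ) F^{(b)}(f)`. -/
def Mbar (N : ℕ) (a b : ℕ) (r : ℝ × ℝ) : ℂ := ((FejerD N a r.1 * FejerD N b r.2 : ℝ) : ℂ)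

/-- the `3R × 3R` deterministic matrix `E̅`. -/
def Ebar (N R : ℕ) (rr : Fin R → ℝ × ℝ) : Matrix (Fin 3 × Fin R) (Fin 3 × Fin R) ℂ :=
  Matrix.of fun a b =>
    sgnF a.1 * ((mu N : ℂ) ^ (wtF a.1 + wtF b.1))⁻¹ *
      Mbar N ((mnF a.1).1 + (mnF b.1).1) ((mnF a.1).2 + (mnF b.1).2) (rr a.2 - rr b.2)

/-- `E̅ ⊗ I_K`. -/
def EbarKron (N K R : ℕ) (rr : Fin R → ℝ × ℝ) :
    Matrix (Fin 3 × Fin R × Fin K) (Fin 3 × Fin R × Fin K) ℂ :=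
  Matrix.of fun a b =>
    Ebar N R rr (a.1, a.2.1) (b.1, b.2.1) * (if a.2.2 = b.2.2 then 1 else 0)

/-- the `3RK × K` matrix `T^{(m',n')}(r)`. -/
def Tmat (N K R : ℕ) (d : ℤ → Fin K → ℂ) (rr : Fin R → ℝ × ℝ) (m' n' : ℕ) (r : ℝ × ℝ) :
    Matrix (Fin 3 × Fin R × Fin K) (Fin K) ℂ :=
  Matrix.of fun a k =>
    ((mu N : ℂ) ^ (m' + n' + wtF a.1))⁻¹ *
      star (Mker N K d (mnF a.1).1 (mnF a.1).2 m' n' r (rr a.2.1) k a.2.2)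

/-- `L_mat`: the first `RK` columns of `E⁻¹`. -/
def Lmat (N K R : ℕ) (d : ℤ → Fin K → ℂ) (rr : Fin R → ℝ × ℝ) :
    Matrix (Fin 3 × Fin R × Fin K) (Fin R × Fin K) ℂ :=
  Matrix.of fun a b => (Emat N K R d rr)⁻¹ a (0, b.1, b.2)

/-- `L̄ ⊗ I_K`, where `L̄` consists of the first `R` columns of `E̅⁻¹`. -/
def LbarKron (N K R : ℕ) (rr : Fin R → ℝ × ℝ) :
    Matrix (Fin 3 × Fin R × Fin K) (Fin R × Fin K) ℂ :=
  Matrix.of fun a b => (Ebar N R rr)⁻¹ (a.1, a.2.1) (0, b.1) * (if a.2.2 = b.2 then 1 else 0)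

/-- the stacked vector `h = (sign(c_1) h_1; …; sign(c_R) h_R)`. -/
def hvec (K R : ℕ) (c : Fin R → ℂ) (h : Fin R → Fin K → ℂ) : Fin R × Fin K → ℂ :=
  fun b => csign (c b.1) * h b.1 b.2

/-- the vector `(h; 0_{RK}; 0_{RK})`. -/
def hfull (K R : ℕ) (c : Fin R → ℂ) (h : Fin R → Fin K → ℂ) :
    Fin 3 × Fin R × Fin K → ℂ :=
  fun a => if a.1 = 0 then csign (c a.2.1) * h a.2.1 a.2.2 else 0

/-- the dual polynomial `f^{(m',n')}(r)`, built from the coefficients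
`(α; μβ; μγ) = E⁻¹ (h; 0; 0)`. -/
def fpoly (N K R : ℕ) (d : ℤ → Fin K → ℂ) (rr : Fin R → ℝ × ℝ)
    (c : Fin R → ℂ) (h : Fin R → Fin K → ℂ) (m' n' : ℕ) (r : ℝ × ℝ) : Fin K → ℂ :=
  fun k => ∑ a : Fin 3 × Fin R × Fin K,
    Mker N K d (mnF a.1).1 (mnF a.1).2 m' n' r (rr a.2.1) k a.2.2 *
      ((mu N : ℂ) ^ (wtF a.1))⁻¹ *
      (Emat N K R d rr)⁻¹.mulVec (hfull K R c h) a

/-- the deterministic polynomial `f̄^{(m',n')}(r)`, built from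
`(ᾱ; μβ̄; μγ̄) = (E̅ ⊗ I_K)⁻¹ (h; 0; 0)`. -/
def fbar (N K R : ℕ) (rr : Fin R → ℝ × ℝ)
    (c : Fin R → ℂ) (h : Fin R → Fin K → ℂ) (m' n' : ℕ) (r : ℝ × ℝ) : Fin K → ℂ :=
  fun k => ∑ i : Fin 3, ∑ j : Fin R,
    Mbar N (m' + (mnF i).1) (n' + (mnF i).2) (r - rr j) *
      ((mu N : ℂ) ^ (wtF i))⁻¹ *
      (EbarKron N K R rr)⁻¹.mulVec (hfull K R c h) (i, j, k)

/-- the vector polynomial `f(r) = ∑_p q_p D̃_p^H a(r)`. -/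
def fq (N K : ℕ) (d : ℤ → Fin K → ℂ) (q : Idx N → ℂ) (r : ℝ × ℝ) : Fin K → ℂ :=
  fun k => ∑ p : Idx N, q p * (Dtil N K d p)ᴴ.mulVec (atom N r) k

/-- the matrix with rows `a(r)^H D̃_p`, `p = -N,…,N`. -/
def Bmat (N K : ℕ) (d : ℤ → Fin K → ℂ) (r : ℝ × ℝ) : Matrix (Idx N) (Fin K) ℂ :=
  Matrix.of fun p k => Matrix.vecMul (star (atom N r)) (Dtil N K d p) k

section Probabilistic

variable {Ω : Type} [MeasureSpace Ω]

/-- Assumption A1. -/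
def A1 (N K : ℕ) (d : Ω → ℤ → Fin K → ℂ) : Prop :=
  (∀ ω, Periodic N (d ω)) ∧
  iIndepFun (fun (l : Idx N) (ω : Ω) => d ω (toZ N l)) ℙ ∧
  (∀ l : Idx N, iIndepFun (fun (j : Fin K) (ω : Ω) => d ω (toZ N l) j) ℙ) ∧
  (∀ (l : Idx N) (j : Fin K),
    IndepFun (fun ω => (d ω (toZ N l) j).re) (fun ω => (d ω (toZ N l) j).im) ℙ) ∧
  (∀ (l : Idx N) (j : Fin K), ∫ ω, d ω (toZ N l) j ∂ℙ = 0) ∧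
  (∀ (l : Idx N) (j j' : Fin K),
    ∫ ω, d ω (toZ N l) j * star (d ω (toZ N l) j') ∂ℙ = if j = j' then 1 else 0)

/-- Assumption A2 (`K̃`-concentration of the columns of `D`). -/
def A2 (N K : ℕ) (Kt : ℝ) (d : Ω → ℤ → Fin K → ℂ) : Prop :=
  1 ≤ Kt ∧ ∃ Cc1 Cc2 : ℝ, 0 < Cc1 ∧ 0 < Cc2 ∧
    ∀ (i : Fin K) (φ : EuclideanSpace ℂ (Idx N) → ℝ), LipschitzWith 1 φ →
      ∀ t : ℝ, 0 < t →
        ℙ {ω | t ≤ |φ ((WithLp.equiv 2 (Idx N → ℂ)).symm (dhat N K (d ω) i)) -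
            ∫ ω', φ ((WithLp.equiv 2 (Idx N → ℂ)).symm (dhat N K (d ω') i)) ∂ℙ|} ≤
          ENNReal.ofReal (Cc1 * Real.exp (-Cc2 * t ^ 2 / Kt ^ 2))

/-- Assumption A3 (`h_j` i.i.d. uniform on the complex unit sphere, independent of `d`). -/
def A3 (K R : ℕ) (d : Ω → ℤ → Fin K → ℂ) (h : Ω → Fin R → Fin K → ℂ) : Prop :=
  (∀ ω j, enorm2 (h ω j) = 1) ∧
  iIndepFun (fun (j : Fin R) (ω : Ω) => h ω j) ℙ ∧
  (∀ j j' : Fin R, Measure.map (fun ω => h ω j) ℙ = Measure.map (fun ω => h ω j') ℙ) ∧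
  (∀ (j : Fin R) (U : (Fin K → ℂ) →ₗ[ℂ] (Fin K → ℂ)), (∀ v, enorm2 (U v) = enorm2 v) →
    Measure.map (fun ω => U (h ω j)) ℙ = Measure.map (fun ω => h ω j) ℙ) ∧
  IndepFun d h ℙ

/-- entrywise expectation of the random kernel matrix. -/
def MkerExp (N K : ℕ) (d : Ω → ℤ → Fin K → ℂ) (m n m' n' : ℕ) (r rj : ℝ × ℝ) :
    Matrix (Fin K) (Fin K) ℂ :=
  Matrix.of fun i j => ∫ ω, Mker N K (d ω) m n m' n' r rj i j ∂ℙ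

/-- entrywise expectation of `T^{(m',n')}(r)`. -/
def TmatExp (N K R : ℕ) (d : Ω → ℤ → Fin K → ℂ) (rr : Fin R → ℝ × ℝ)
    (m' n' : ℕ) (r : ℝ × ℝ) : Matrix (Fin 3 × Fin R × Fin K) (Fin K) ℂ :=
  Matrix.of fun a k => ∫ ω, Tmat N K R (d ω) rr m' n' r a k ∂ℙ

end Probabilistic

end Blind2D
namespace Blind2D

lemma e2_add (x y : ℝ) : e2 (x + y) = e2 x * e2 y := by
  unfold e2
  rw [← Complex.exp_add]
  congr 1
  push_cast
  ring

lemma e2_mul (x y : ℝ) : e2 x * e2 y = e2 (x + y) := (e2_add x y).symm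

lemma e2_zero : e2 0 = 1 := by simp [e2]

lemma norm_e2 (x : ℝ) : ‖e2 x‖ = 1 := by
  simp [e2, Complex.norm_exp, Complex.mul_re, Complex.mul_im]

lemma e2_int (n : ℤ) : e2 (n : ℝ) = 1 := by
  unfold e2
  rw [show Complex.I * (2 * Real.pi * (n:ℝ)) = (n:ℤ) * (2 * Real.pi * Complex.I) by push_cast; ring]
  exact Complex.exp_int_mul_two_pi_mul_I n

lemma e2_pow (x : ℝ) (c : ℕ) : e2 x ^ c = e2 (c * x) := by
  unfold e2
  rw [← Complex.exp_nat_mul]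
  congr 1
  push_cast
  ring

lemma Lr_pos (N : ℕ) : 0 < Lr N := by unfold Lr; positivity

lemma orth (N : ℕ) (j : ℤ) (hj : |j| < (2*N+1 : ℤ)) :
    ∑ l : Idx N, e2 ((j:ℝ) * tv N l / Lr N) = if j = 0 then (Lr N : ℂ) else 0 := by
  have hL : (Lr N : ℝ) ≠ 0 := ne_of_gt (Lr_pos N)
  have key : ∀ l : Idx N, e2 ((j:ℝ) * tv N l / Lr N)
      = e2 (-((j:ℝ) * N / Lr N)) * e2 ((j:ℝ) / Lr N) ^ (l : ℕ) := by
    intro l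
    rw [e2_pow, e2_mul]
    congr 1
    unfold tv toZ
    push_cast
    ring
  rw [Finset.sum_congr rfl (fun l _ => key l), ← Finset.mul_sum]
  by_cases h0 : j = 0
  · subst h0
    rw [if_pos rfl]
    simp only [Int.cast_zero, zero_mul, zero_div, neg_zero, e2_zero, one_pow, one_mul]
    simp [Lr, Finset.card_univ]
  · rw [if_neg h0]
    have hω1 : e2 ((j:ℝ) / Lr N) ≠ 1 := by
      intro h
      unfold e2 at h
      rw [Complex.exp_eq_one_iff] at h
      obtain ⟨k, hk⟩ := h
      have him := congrArg Complex.im hk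
      simp [Complex.mul_im, Complex.mul_re] at him
      -- him : 2 * π * (j/L) = k * (2π)  (roughly)
      have hπ := Real.pi_ne_zero
      field_simp at him
      have h2 : (2*Real.pi) * (j:ℝ) = (2*Real.pi) * ((k:ℝ) * Lr N) := by rw [him]; ring
      have : (j : ℝ) = (k : ℝ) * Lr N :=
        mul_left_cancel₀ (by positivity : (2*Real.pi) ≠ 0) h2
      rw [Lr] at this
      have hz : j = k * (2*N+1) := by exact_mod_cast this
      rcases eq_or_ne k 0 with hk0 | hk0
      · exact h0 (by simp [hk0] at hz; exact hz)
      · have h1 : (1:ℤ) ≤ |k| := Int.one_le_abs hk0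
        have : (2*N+1 : ℤ) ≤ |j| := by
          rw [hz, abs_mul]
          calc (2*N+1:ℤ) = 1 * (2*N+1) := by ring
          _ ≤ |k| * |(2*N+1:ℤ)| := by
              apply mul_le_mul h1 (le_abs_self _) (by positivity) (abs_nonneg k)
        omega
    have hωL : e2 ((j:ℝ) / Lr N) ^ (2*N+1) = 1 := by
      rw [e2_pow]
      rw [show ((2*N+1:ℕ):ℝ) * ((j:ℝ) / Lr N) = ((j:ℤ):ℝ) by
        rw [Lr]; field_simp; norm_num]
      exact e2_int j
    have hgeom := geom_sum_eq hω1 (2*N+1)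
    rw [Fin.sum_univ_eq_sum_range (fun i => e2 ((j:ℝ) / Lr N) ^ i), hgeom, hωL]
    simp



lemma e2_conj (x : ℝ) : (starRingEnd ℂ) (e2 x) = e2 (-x) := by
  unfold e2
  rw [← Complex.exp_conj]
  congr 1
  simp only [_root_.map_mul, Complex.conj_I, map_ofNat]
  rw [Complex.conj_ofReal, Complex.conj_ofReal]
  push_cast
  ring

lemma sq_norm_eq (z : ℂ) : ‖z‖^2 = (z * (starRingEnd ℂ) z).re := by
  rw [Complex.mul_conj]
  rw [Complex.sq_norm]
  simp

lemma parseval (N : ℕ) (c : Idx N → ℂ) (d : Idx N → ℤ)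
    (hinj : Function.Injective d) (hbd : ∀ k k', |d k - d k'| < (2*N+1:ℤ)) :
    ∑ l : Idx N, ‖∑ k : Idx N, c k * e2 ((d k : ℝ) * tv N l / Lr N)‖^2
      = Lr N * ∑ k : Idx N, ‖c k‖^2 := by
  have expand : ∀ l : Idx N,
      (∑ k : Idx N, c k * e2 ((d k : ℝ) * tv N l / Lr N)) *
        (starRingEnd ℂ) (∑ k : Idx N, c k * e2 ((d k : ℝ) * tv N l / Lr N))
      = ∑ k : Idx N, ∑ j : Idx N, (c k * (starRingEnd ℂ) (c j)) *
          e2 (((d k - d j : ℤ):ℝ) * tv N l / Lr N) := by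
    intro l
    rw [_root_.map_sum, Finset.sum_mul_sum]
    apply Finset.sum_congr rfl
    intro k _
    apply Finset.sum_congr rfl
    intro j _
    rw [_root_.map_mul, e2_conj]
    rw [show c k * e2 ((d k : ℝ) * tv N l / Lr N) *
        ((starRingEnd ℂ) (c j) * e2 (-((d j : ℝ) * tv N l / Lr N)))
      = (c k * (starRingEnd ℂ) (c j)) *
        (e2 ((d k : ℝ) * tv N l / Lr N) * e2 (-((d j : ℝ) * tv N l / Lr N))) from by ring]
    rw [e2_mul]
    congr 2
    push_cast
    ring
  calc ∑ l : Idx N, ‖∑ k : Idx N, c k * e2 ((d k : ℝ) * tv N l / Lr N)‖^2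
      = (∑ l : Idx N, (∑ k : Idx N, c k * e2 ((d k : ℝ) * tv N l / Lr N)) *
          (starRingEnd ℂ) (∑ k : Idx N, c k * e2 ((d k : ℝ) * tv N l / Lr N))).re := by
        rw [Complex.re_sum]
        exact Finset.sum_congr rfl fun l _ => sq_norm_eq _
    _ = (∑ k : Idx N, ∑ j : Idx N, (c k * (starRingEnd ℂ) (c j)) *
          ∑ l : Idx N, e2 (((d k - d j : ℤ):ℝ) * tv N l / Lr N)).re := by
        congr 1
        rw [Finset.sum_congr rfl fun l _ => expand l]
        rw [Finset.sum_comm]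
        apply Finset.sum_congr rfl
        intro k _
        rw [Finset.sum_comm]
        apply Finset.sum_congr rfl
        intro j _
        rw [Finset.mul_sum]
    _ = (∑ k : Idx N, (c k * (starRingEnd ℂ) (c k)) * (Lr N : ℂ)).re := by
        congr 1
        apply Finset.sum_congr rfl
        intro k _
        rw [Finset.sum_congr rfl fun j (_ : j ∈ Finset.univ) => by
          rw [orth N (d k - d j) (hbd k j)]]
        simp [sub_eq_zero, hinj.eq_iff]
    _ = Lr N * ∑ k : Idx N, ‖c k‖^2 := by
        have hterm : ∀ k : Idx N, (c k * (starRingEnd ℂ) (c k)) * (Lr N : ℂ)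
            = ((‖c k‖^2 * Lr N : ℝ) : ℂ) := fun k => by
          rw [Complex.mul_conj, Complex.normSq_eq_norm_sq]
          push_cast
          ring
        rw [Finset.sum_congr rfl fun k _ => hterm k, ← Complex.ofReal_sum]
        rw [Complex.ofReal_re, Finset.mul_sum]
        exact Finset.sum_congr rfl fun k _ => by ring


lemma sum_shift_one (N : ℕ) (G : ℤ → ℝ) (hG : ∀ q, G (q + (2*N+1:ℤ)) = G q) (b : ℤ) :
    ∑ k : Idx N, G (b + 1 + toZ N k) = ∑ k : Idx N, G (b + toZ N k) := by
  have h1 : ∑ k : Idx N, G (b + 1 + toZ N k)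
      = ∑ i ∈ Finset.range (2*N+1), G (b + (((i:ℤ) + 1) - N)) := by
    rw [← Fin.sum_univ_eq_sum_range (fun i => G (b + (((i:ℤ) + 1) - N))) (2*N+1)]
    exact Finset.sum_congr rfl fun k _ => congrArg G (by unfold toZ; push_cast; ring)
  have h2 : ∑ k : Idx N, G (b + toZ N k)
      = ∑ i ∈ Finset.range (2*N+1), G (b + ((i:ℤ) - N)) := by
    rw [← Fin.sum_univ_eq_sum_range (fun i => G (b + ((i:ℤ) - N))) (2*N+1)]
    exact Finset.sum_congr rfl fun k _ => congrArg G (by unfold toZ; push_cast; ring)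
  rw [h1, h2]
  have hsucc' := Finset.sum_range_succ' (fun i => G (b + ((i:ℤ) - N))) (2*N+1)
  have hsucc := Finset.sum_range_succ (fun i => G (b + ((i:ℤ) - N))) (2*N+1)
  have hper : G (b + (((2*N+1 : ℕ):ℤ) - N)) = G (b + ((0:ℤ) - N)) := by
    rw [show (b + (((2*N+1 : ℕ):ℤ) - N)) = (b + ((0:ℤ) - N)) + (2*N+1:ℤ) by push_cast; ring]
    exact hG _
  have : ∑ i ∈ Finset.range (2*N+1), G (b + (((i:ℤ) + 1) - N))
      = ∑ i ∈ Finset.range (2*N+1), G (b + ((i:ℤ) - N)) := by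
    have e1 : ∀ i : ℕ, G (b + (((i:ℤ) + 1) - N)) = G (b + (((i+1 : ℕ):ℤ) - N)) :=
      fun i => congrArg G (by push_cast; ring)
    rw [Finset.sum_congr rfl fun i _ => e1 i]
    have := hsucc'.symm.trans hsucc
    -- this : Σ_{i<L} g (i+1) + g 0 = Σ_{i<L} g i + g L
    rw [hper] at this
    push_cast at this ⊢
    linarith [this]
  exact this

lemma sum_shift (N : ℕ) (G : ℤ → ℝ) (hG : ∀ q, G (q + (2*N+1:ℤ)) = G q) (a : ℤ) :
    ∑ k : Idx N, G (a + toZ N k) = ∑ k : Idx N, G (toZ N k) := by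
  induction a using Int.induction_on with
  | zero => simp
  | succ b ih => rw [show ((b:ℤ)+1) = (b:ℤ) + 1 from rfl, sum_shift_one N G hG b, ih]
  | pred b ih =>
      have := sum_shift_one N G hG (-(b+1))
      rw [show (-(b:ℤ)-1) = -((b:ℤ)+1) by ring, ← ih, ← this]
      exact Finset.sum_congr rfl fun k _ => congrArg G (by ring)

lemma sum_rev (N : ℕ) (G : ℤ → ℝ) (a : ℤ) :
    ∑ k : Idx N, G (a - toZ N k) = ∑ k : Idx N, G (a + toZ N k) := by
  have h1 : ∑ k : Idx N, G (a - toZ N k)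
      = ∑ i ∈ Finset.range (2*N+1), G (a - ((i:ℤ) - N)) := by
    rw [← Fin.sum_univ_eq_sum_range (fun i => G (a - ((i:ℤ) - N))) (2*N+1)]
    exact Finset.sum_congr rfl fun k _ => congrArg G (by unfold toZ; push_cast; ring)
  have h2 : ∑ k : Idx N, G (a + toZ N k)
      = ∑ i ∈ Finset.range (2*N+1), G (a + ((i:ℤ) - N)) := by
    rw [← Fin.sum_univ_eq_sum_range (fun i => G (a + ((i:ℤ) - N))) (2*N+1)]
    exact Finset.sum_congr rfl fun k _ => congrArg G (by unfold toZ; push_cast; ring)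
  rw [h1, h2, ← Finset.sum_range_reflect]
  apply Finset.sum_congr rfl
  intro i hi
  apply congrArg G
  have : i < 2*N+1 := Finset.mem_range.mp hi
  have : ((2*N+1-1-i : ℕ):ℤ) = 2*(N:ℤ) - i := by omega
  rw [this]
  ring

lemma sum_shift' (N : ℕ) (G : ℤ → ℝ) (hG : ∀ q, G (q + (2*N+1:ℤ)) = G q) (a : ℤ) :
    ∑ k : Idx N, G (a - toZ N k) = ∑ k : Idx N, G (toZ N k) := by
  rw [sum_rev, sum_shift N G hG a]



lemma Tnum_one_le (N : ℕ) : 1 ≤ Tnum N := by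
  unfold Tnum
  have : (0:ℝ) ≤ (N:ℝ)/2 := by positivity
  linarith

lemma TnumZ_cast_le (N : ℕ) : (TnumZ N : ℝ) ≤ Tnum N := by
  unfold TnumZ Tnum
  have h : 2 * ((N:ℤ)/2) ≤ (N:ℤ) := by omega
  have h2 : (((N:ℤ)/2 : ℤ) : ℝ) ≤ (N:ℝ)/2 := by
    have h' : ((2 * ((N:ℤ)/2) : ℤ) : ℝ) ≤ ((N:ℤ) : ℝ) := by exact_mod_cast h
    push_cast at h'
    linarith
  push_cast
  linarith

lemma gcoef_term_bounds (N : ℕ) (j : ℤ) :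
    ∀ l ∈ Finset.Icc (max (j - TnumZ N) (-TnumZ N)) (min (j + TnumZ N) (TnumZ N)),
      0 ≤ (1 - |(l : ℝ)| / Tnum N) * (1 - |(j : ℝ) - (l : ℝ)| / Tnum N) ∧
      (1 - |(l : ℝ)| / Tnum N) * (1 - |(j : ℝ) - (l : ℝ)| / Tnum N) ≤ 1 := by
  intro l hl
  rw [Finset.mem_Icc] at hl
  have hT := Tnum_one_le N
  have hTZ := TnumZ_cast_le N
  have hTpos : (0:ℝ) < Tnum N := lt_of_lt_of_le one_pos hT
  have h1 : |(l:ℝ)| ≤ Tnum N := by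
    rw [← Int.cast_abs]
    have habs : |l| ≤ TnumZ N := by
      rcases hl with ⟨ha, hb⟩
      have := le_trans (le_max_right _ _) ha
      have := le_trans hb (min_le_right _ _)
      rw [abs_le]; omega
    calc ((|l| : ℤ) : ℝ) ≤ (TnumZ N : ℝ) := by exact_mod_cast habs
      _ ≤ Tnum N := hTZ
  have h2 : |(j:ℝ) - (l:ℝ)| ≤ Tnum N := by
    rw [show ((j:ℝ) - (l:ℝ)) = ((j - l : ℤ) : ℝ) by push_cast; ring, ← Int.cast_abs]
    have habs : |j - l| ≤ TnumZ N := by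
      rcases hl with ⟨ha, hb⟩
      have := le_trans (le_max_left _ _) ha
      have := le_trans hb (min_le_left _ _)
      rw [abs_le]; omega
    calc ((|j - l| : ℤ) : ℝ) ≤ (TnumZ N : ℝ) := by exact_mod_cast habs
      _ ≤ Tnum N := hTZ
  have f1l : 0 ≤ 1 - |(l : ℝ)| / Tnum N := by
    rw [sub_nonneg, div_le_one hTpos]; exact h1
  have f2l : 0 ≤ 1 - |(j : ℝ) - (l : ℝ)| / Tnum N := by
    rw [sub_nonneg, div_le_one hTpos]; exact h2
  have f1u : 1 - |(l : ℝ)| / Tnum N ≤ 1 := by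
    have : 0 ≤ |(l:ℝ)| / Tnum N := by positivity
    linarith
  have f2u : 1 - |(j : ℝ) - (l : ℝ)| / Tnum N ≤ 1 := by
    have : 0 ≤ |(j:ℝ) - (l:ℝ)| / Tnum N := by positivity
    linarith
  constructor
  · exact mul_nonneg f1l f2l
  · calc (1 - |(l : ℝ)| / Tnum N) * (1 - |(j : ℝ) - (l : ℝ)| / Tnum N)
        ≤ 1 * 1 := mul_le_mul f1u f2u f2l (by norm_num)
      _ = 1 := by norm_num

lemma gcoef_nonneg (N : ℕ) (j : ℤ) : 0 ≤ gcoef N j := by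
  unfold gcoef
  have hT := Tnum_one_le N
  apply mul_nonneg (by positivity)
  exact Finset.sum_nonneg fun l hl => (gcoef_term_bounds N j l hl).1

lemma gcoef_abs_le (N : ℕ) (j : ℤ) : |gcoef N j| ≤ 3 := by
  rw [abs_of_nonneg (gcoef_nonneg N j)]
  unfold gcoef
  have hT := Tnum_one_le N
  have hTZ := TnumZ_cast_le N
  have hTpos : (0:ℝ) < Tnum N := lt_of_lt_of_le one_pos hT
  set s := Finset.Icc (max (j - TnumZ N) (-TnumZ N)) (min (j + TnumZ N) (TnumZ N)) with hs
  have hsum : ∑ l ∈ s, (1 - |(l : ℝ)| / Tnum N) * (1 - |(j : ℝ) - (l : ℝ)| / Tnum N)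
      ≤ (s.card : ℝ) := by
    calc ∑ l ∈ s, (1 - |(l : ℝ)| / Tnum N) * (1 - |(j : ℝ) - (l : ℝ)| / Tnum N)
        ≤ ∑ _l ∈ s, (1:ℝ) := Finset.sum_le_sum fun l hl => (gcoef_term_bounds N j l hl).2
      _ = (s.card : ℝ) := by simp
  have hcard : (s.card : ℝ) ≤ 3 * Tnum N := by
    have hsub : s ⊆ Finset.Icc (-TnumZ N) (TnumZ N) :=
      Finset.Icc_subset_Icc (le_max_right _ _) (min_le_right _ _)
    have h1 : s.card ≤ (Finset.Icc (-TnumZ N) (TnumZ N)).card := Finset.card_le_card hsub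
    have h2 : (Finset.Icc (-TnumZ N) (TnumZ N)).card = (2 * TnumZ N + 1).toNat := by
      rw [Int.card_Icc]; congr 1; ring
    have hTZ0 : 0 ≤ TnumZ N := by unfold TnumZ; omega
    have h3' : (((2 * TnumZ N + 1).toNat : ℕ) : ℤ) = 2 * TnumZ N + 1 :=
      Int.toNat_of_nonneg (by omega)
    calc (s.card : ℝ) ≤ ((Finset.Icc (-TnumZ N) (TnumZ N)).card : ℝ) := by exact_mod_cast h1
      _ = 2 * (TnumZ N : ℝ) + 1 := by rw [h2]; exact_mod_cast h3' 
      _ ≤ 2 * Tnum N + 1 := by linarith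
      _ ≤ 3 * Tnum N := by linarith
  calc (Tnum N)⁻¹ * ∑ l ∈ s, (1 - |(l : ℝ)| / Tnum N) * (1 - |(j : ℝ) - (l : ℝ)| / Tnum N)
      ≤ (Tnum N)⁻¹ * (3 * Tnum N) := by
        apply mul_le_mul_of_nonneg_left (le_trans hsum hcard) (by positivity)
    _ = 3 := by field_simp

lemma tv_abs_le (N : ℕ) (k : Idx N) : |tv N k| ≤ (N : ℝ) := by
  unfold tv toZ
  rw [← Int.cast_abs]
  have hk : (k : ℕ) < 2 * N + 1 := k.isLt
  have : |(k : ℤ) - (N : ℤ)| ≤ (N : ℤ) := by rw [abs_le]; omega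
  exact_mod_cast this

lemma norm_factor (N : ℕ) (a : ℕ) (k : Idx N) :
    ‖(-(Complex.I * (2 * (Real.pi : ℂ) * (tv N k : ℂ)))) ^ a‖ ≤ (2 * Real.pi * N) ^ a := by
  rw [norm_pow]
  apply pow_le_pow_left₀ (norm_nonneg _)
  rw [norm_neg, norm_mul, Complex.norm_I, one_mul, norm_mul, norm_mul]
  simp only [Complex.norm_ofNat, Complex.norm_real, Real.norm_eq_abs]
  rw [abs_of_nonneg Real.pi_pos.le]
  have := tv_abs_le N k
  have hπ := Real.pi_pos
  nlinarith [abs_nonneg (tv N k)]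



def Avec (N m' : ℕ) (τ : ℝ) : Idx N → ℂ := fun k =>
  (-(Complex.I * (2 * Real.pi * tv N k))) ^ m' * e2 (-(tv N k * τ))

def Bvec (N m : ℕ) (τj : ℝ) : Idx N → ℂ := fun k =>
  (gcoef N (toZ N k) : ℂ) * (-(Complex.I * (2 * Real.pi * tv N k))) ^ m * e2 (tv N k * τj)

def Pvec (N a : ℕ) (x : ℝ) : Idx N → ℂ := fun p =>
  (gcoef N (toZ N p) : ℂ) * (-(Complex.I * (2 * Real.pi * tv N p))) ^ a * e2 (-(tv N p * x))

def Sfun (N a : ℕ) (x : ℝ) (q : ℤ) : ℂ :=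
  ∑ p : Idx N, Pvec N a x p * e2 ((toZ N p : ℝ) * (q : ℝ) / Lr N)

def Cmat (N m n m' n' : ℕ) (r rj : ℝ × ℝ) (k k' : Idx N) : ℂ :=
  (Lr N : ℂ)⁻¹ * ((Tnum N : ℂ) ^ 2)⁻¹ * Avec N m' r.1 k * Bvec N m rj.1 k' *
    Sfun N (n + n') (r.2 - rj.2) (toZ N k - toZ N k')

lemma collapse4 (c : ℂ) (x1 x2 x3 x4 : ℝ) :
    c * (e2 x1 * e2 x2 * e2 x3 * e2 x4) = c * e2 (x1 + x2 + x3 + x4) := by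
  rw [e2_mul, e2_mul, e2_mul]

lemma collapse6 (c : ℂ) (x1 x2 x3 x4 x5 x6 : ℝ) :
    c * (e2 x1 * e2 x2 * e2 x3 * e2 x4 * e2 x5 * e2 x6)
      = c * e2 (x1 + x2 + x3 + x4 + x5 + x6) := by
  rw [e2_mul, e2_mul, e2_mul, e2_mul, e2_mul]

lemma Rmat_decomp (N : ℕ) (m n m' n' : ℕ) (r rj : ℝ × ℝ) (l l' : Idx N) :
    Rmat N m n m' n' r rj l l' =
      ∑ k : Idx N, (∑ k' : Idx N, Cmat N m n m' n' r rj k k' *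
          e2 ((toZ N k' : ℝ) * tv N l' / Lr N)) *
        e2 (((-toZ N k : ℤ) : ℝ) * tv N l / Lr N) := by
  calc Rmat N m n m' n' r rj l l'
      = ∑ p : Idx N, ∑ k : Idx N, ∑ k' : Idx N, (Lr N : ℂ)⁻¹ * (((Tnum N : ℂ) ^ 2)⁻¹ *
          ((gcoef N (toZ N k') : ℂ) * (-(Complex.I * (2 * Real.pi * tv N k'))) ^ m *
          (-(Complex.I * (2 * Real.pi * tv N k))) ^ m' *
          (gcoef N (toZ N p) : ℂ) * (-(Complex.I * (2 * Real.pi * tv N p))) ^ (n + n') *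
          e2 (tv N k * (tv N p - tv N l) / Lr N) *
          e2 (-(tv N k' * (tv N p - tv N l') / Lr N)) *
          e2 (-(tv N k * r.1 - tv N k' * rj.1)) *
          e2 (-(tv N p * (r.2 - rj.2))))) := by
        unfold Rmat
        rw [Matrix.of_apply]
        simp only [Finset.mul_sum]
    _ = ∑ k : Idx N, ∑ k' : Idx N, ∑ p : Idx N, (Lr N : ℂ)⁻¹ * (((Tnum N : ℂ) ^ 2)⁻¹ *
          ((gcoef N (toZ N k') : ℂ) * (-(Complex.I * (2 * Real.pi * tv N k'))) ^ m *
          (-(Complex.I * (2 * Real.pi * tv N k))) ^ m' *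
          (gcoef N (toZ N p) : ℂ) * (-(Complex.I * (2 * Real.pi * tv N p))) ^ (n + n') *
          e2 (tv N k * (tv N p - tv N l) / Lr N) *
          e2 (-(tv N k' * (tv N p - tv N l') / Lr N)) *
          e2 (-(tv N k * r.1 - tv N k' * rj.1)) *
          e2 (-(tv N p * (r.2 - rj.2))))) := by
        rw [Finset.sum_comm]
        exact Finset.sum_congr rfl fun k _ => Finset.sum_comm
    _ = _ := by
        unfold Cmat Sfun Avec Bvec Pvec
        simp only [Finset.sum_mul, Finset.mul_sum]
        refine Finset.sum_congr rfl fun k _ => Finset.sum_congr rfl fun k' _ =>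
          Finset.sum_congr rfl fun p _ => ?_
        set c0 : ℂ := (Lr N : ℂ)⁻¹ * ((Tnum N : ℂ) ^ 2)⁻¹ *
          (gcoef N (toZ N k') : ℂ) * (-(Complex.I * (2 * Real.pi * tv N k'))) ^ m *
          (-(Complex.I * (2 * Real.pi * tv N k))) ^ m' *
          (gcoef N (toZ N p) : ℂ) * (-(Complex.I * (2 * Real.pi * tv N p))) ^ (n + n') with hc0
        calc (Lr N : ℂ)⁻¹ * (((Tnum N : ℂ) ^ 2)⁻¹ *
              ((gcoef N (toZ N k') : ℂ) * (-(Complex.I * (2 * Real.pi * tv N k'))) ^ m *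
              (-(Complex.I * (2 * Real.pi * tv N k))) ^ m' *
              (gcoef N (toZ N p) : ℂ) * (-(Complex.I * (2 * Real.pi * tv N p))) ^ (n + n') *
              e2 (tv N k * (tv N p - tv N l) / Lr N) *
              e2 (-(tv N k' * (tv N p - tv N l') / Lr N)) *
              e2 (-(tv N k * r.1 - tv N k' * rj.1)) *
              e2 (-(tv N p * (r.2 - rj.2)))))
            = c0 * (e2 (tv N k * (tv N p - tv N l) / Lr N) *
              e2 (-(tv N k' * (tv N p - tv N l') / Lr N)) *
              e2 (-(tv N k * r.1 - tv N k' * rj.1)) *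
              e2 (-(tv N p * (r.2 - rj.2)))) := by rw [hc0]; ring
          _ = c0 * e2 (tv N k * (tv N p - tv N l) / Lr N +
              -(tv N k' * (tv N p - tv N l') / Lr N) +
              -(tv N k * r.1 - tv N k' * rj.1) +
              -(tv N p * (r.2 - rj.2))) := collapse4 _ _ _ _ _
          _ = c0 * e2 (-(tv N k * r.1) + tv N k' * rj.1 + -(tv N p * (r.2 - rj.2)) +
              (toZ N p : ℝ) * ((toZ N k - toZ N k' : ℤ) : ℝ) / Lr N +
              (toZ N k' : ℝ) * tv N l' / Lr N +
              ((-toZ N k : ℤ) : ℝ) * tv N l / Lr N) := by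
                congr 1
                unfold tv
                push_cast
                ring
          _ = c0 * (e2 (-(tv N k * r.1)) * e2 (tv N k' * rj.1) *
              e2 (-(tv N p * (r.2 - rj.2))) *
              e2 ((toZ N p : ℝ) * ((toZ N k - toZ N k' : ℤ) : ℝ) / Lr N) *
              e2 ((toZ N k' : ℝ) * tv N l' / Lr N) *
              e2 (((-toZ N k : ℤ) : ℝ) * tv N l / Lr N)) := (collapse6 _ _ _ _ _ _ _).symm
          _ = _ := by rw [hc0]; ring



lemma toZ_inj (N : ℕ) : Function.Injective (toZ N) := by
  intro a b h
  unfold toZ at h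
  exact Fin.ext (by omega)

lemma toZ_bd (N : ℕ) (k k' : Idx N) : |toZ N k - toZ N k'| < (2 * N + 1 : ℤ) := by
  unfold toZ
  have h1 : (k : ℕ) < 2 * N + 1 := k.isLt
  have h2 : (k' : ℕ) < 2 * N + 1 := k'.isLt
  rw [abs_lt]
  omega

lemma negtoZ_inj (N : ℕ) : Function.Injective (fun k : Idx N => -toZ N k) := by
  intro a b h
  simp only [neg_inj] at h
  exact toZ_inj N h

lemma negtoZ_bd (N : ℕ) (k k' : Idx N) : |(-toZ N k) - (-toZ N k')| < (2 * N + 1 : ℤ) := by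
  rw [show (-toZ N k) - (-toZ N k') = -(toZ N k - toZ N k') by ring, abs_neg]
  exact toZ_bd N k k'

lemma norm_Avec_le (N m' : ℕ) (τ : ℝ) (k : Idx N) :
    ‖Avec N m' τ k‖ ≤ (2 * Real.pi * N) ^ m' := by
  unfold Avec
  rw [norm_mul, norm_e2, mul_one]
  exact norm_factor N m' k

lemma norm_Bvec_le (N m : ℕ) (τj : ℝ) (k : Idx N) :
    ‖Bvec N m τj k‖ ≤ 3 * (2 * Real.pi * N) ^ m := by
  unfold Bvec
  rw [norm_mul, norm_e2, mul_one, norm_mul]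
  have h1 : ‖((gcoef N (toZ N k) : ℝ) : ℂ)‖ ≤ 3 := by
    rw [Complex.norm_real, Real.norm_eq_abs]
    exact gcoef_abs_le N (toZ N k)
  exact mul_le_mul h1 (norm_factor N m k) (norm_nonneg _) (by norm_num)

lemma norm_Pvec_le (N a : ℕ) (x : ℝ) (p : Idx N) :
    ‖Pvec N a x p‖ ≤ 3 * (2 * Real.pi * N) ^ a := by
  unfold Pvec
  rw [norm_mul, norm_e2, mul_one, norm_mul]
  have h1 : ‖((gcoef N (toZ N p) : ℝ) : ℂ)‖ ≤ 3 := by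
    rw [Complex.norm_real, Real.norm_eq_abs]
    exact gcoef_abs_le N (toZ N p)
  exact mul_le_mul h1 (norm_factor N a p) (norm_nonneg _) (by norm_num)

lemma Sfun_periodic (N a : ℕ) (x : ℝ) (q : ℤ) :
    Sfun N a x (q + (2 * N + 1 : ℤ)) = Sfun N a x q := by
  unfold Sfun
  apply Finset.sum_congr rfl
  intro p _
  have hL : Lr N ≠ 0 := ne_of_gt (Lr_pos N)
  rw [show (toZ N p : ℝ) * ((q + (2 * N + 1 : ℤ) : ℤ) : ℝ) / Lr N
      = (toZ N p : ℝ) * (q : ℝ) / Lr N + ((toZ N p : ℤ) : ℝ) by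
    rw [Lr] at hL ⊢
    push_cast
    field_simp]
  rw [e2_add, e2_int, mul_one]

lemma Sfun_sq_sum (N a : ℕ) (x : ℝ) :
    ∑ k' : Idx N, ‖Sfun N a x (toZ N k')‖ ^ 2 = Lr N * ∑ p : Idx N, ‖Pvec N a x p‖ ^ 2 := by
  have h : ∀ k' : Idx N, Sfun N a x (toZ N k')
      = ∑ p : Idx N, Pvec N a x p * e2 ((toZ N p : ℝ) * tv N k' / Lr N) := by
    intro k'
    unfold Sfun tv
    rfl
  rw [Finset.sum_congr rfl fun k' _ => by rw [h k']]
  exact parseval N _ (toZ N) (toZ_inj N) (toZ_bd N)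




/-- **Lemma 3**: Frobenius-norm bound on the deterministic matrix `R^{(m',n')}_{(m,n)}`. -/
theorem Rmat_frobenius_bound :
    ∃ Cs2 : ℝ, 0 < Cs2 ∧
      ∀ (N : ℕ) (r rj : ℝ × ℝ) (m m' n n' : ℕ),
        0 < N → r ∈ box → rj ∈ box → m ≤ 1 → m' ≤ 1 → n ≤ 1 → n' ≤ 1 →
        frobNorm (Rmat N m n m' n' r rj) ≤
          Cs2 / Real.sqrt (Lr N) * (2 * Real.pi * N) ^ (m + m' + n + n') := by
  refine ⟨144, by norm_num, ?_⟩
  intro N r rj m m' n n' hN _ _ _ _ _ _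
  set W : ℝ := 2 * Real.pi * (N : ℝ) with hW
  have hLpos := Lr_pos N
  have hTpos : 0 < Tnum N := lt_of_lt_of_le one_pos (Tnum_one_le N)
  have hWnn : 0 ≤ W := by rw [hW]; positivity
  set w : ℕ := m + m' + n + n' with hw
  -- Step 1: Frobenius square via double Parseval
  have hfrob2 : ∑ l : Idx N, ∑ l' : Idx N, ‖Rmat N m n m' n' r rj l l'‖ ^ 2
      = Lr N * (Lr N * ∑ k : Idx N, ∑ k' : Idx N, ‖Cmat N m n m' n' r rj k k'‖ ^ 2) := by
    calc ∑ l : Idx N, ∑ l' : Idx N, ‖Rmat N m n m' n' r rj l l'‖ ^ 2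
        = ∑ l' : Idx N, ∑ l : Idx N, ‖Rmat N m n m' n' r rj l l'‖ ^ 2 := Finset.sum_comm
      _ = ∑ l' : Idx N, Lr N * ∑ k : Idx N,
            ‖∑ k' : Idx N, Cmat N m n m' n' r rj k k' *
              e2 ((toZ N k' : ℝ) * tv N l' / Lr N)‖ ^ 2 := by
          apply Finset.sum_congr rfl
          intro l' _
          rw [Finset.sum_congr rfl fun l (_ : l ∈ Finset.univ) => by
            rw [Rmat_decomp N m n m' n' r rj l l']]
          exact parseval N _ (fun k => -toZ N k) (negtoZ_inj N) (negtoZ_bd N)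
      _ = Lr N * ∑ k : Idx N, ∑ l' : Idx N,
            ‖∑ k' : Idx N, Cmat N m n m' n' r rj k k' *
              e2 ((toZ N k' : ℝ) * tv N l' / Lr N)‖ ^ 2 := by
          rw [← Finset.mul_sum, Finset.sum_comm]
      _ = Lr N * ∑ k : Idx N, Lr N * ∑ k' : Idx N, ‖Cmat N m n m' n' r rj k k'‖ ^ 2 := by
          congr 1
          exact Finset.sum_congr rfl fun k _ =>
            parseval N _ (toZ N) (toZ_inj N) (toZ_bd N)
      _ = Lr N * (Lr N * ∑ k : Idx N, ∑ k' : Idx N, ‖Cmat N m n m' n' r rj k k'‖ ^ 2) := by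
          rw [← Finset.mul_sum]
  -- Step 2: entrywise bound on Cmat
  have hCbound : ∀ k k' : Idx N, ‖Cmat N m n m' n' r rj k k'‖ ^ 2
      ≤ ((Lr N)⁻¹ * ((Tnum N) ^ 2)⁻¹ * W ^ m' * (3 * W ^ m)) ^ 2 *
        ‖Sfun N (n + n') (r.2 - rj.2) (toZ N k - toZ N k')‖ ^ 2 := by
    intro k k'
    have hb : ‖Cmat N m n m' n' r rj k k'‖
        ≤ (Lr N)⁻¹ * ((Tnum N) ^ 2)⁻¹ * W ^ m' * (3 * W ^ m) *
          ‖Sfun N (n + n') (r.2 - rj.2) (toZ N k - toZ N k')‖ := by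
      unfold Cmat
      rw [norm_mul, norm_mul, norm_mul, norm_mul]
      have h1 : ‖((Lr N : ℝ) : ℂ)⁻¹‖ = (Lr N)⁻¹ := by
        rw [norm_inv, Complex.norm_real, Real.norm_eq_abs, abs_of_pos hLpos]
      have h2 : ‖(((Tnum N : ℝ) : ℂ) ^ 2)⁻¹‖ = ((Tnum N) ^ 2)⁻¹ := by
        rw [norm_inv, norm_pow, Complex.norm_real, Real.norm_eq_abs, abs_of_pos hTpos]
      rw [h1, h2]
      gcongr
      · exact norm_Avec_le N m' r.1 k
      · exact norm_Bvec_le N m rj.1 k'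
    calc ‖Cmat N m n m' n' r rj k k'‖ ^ 2
        ≤ ((Lr N)⁻¹ * ((Tnum N) ^ 2)⁻¹ * W ^ m' * (3 * W ^ m) *
            ‖Sfun N (n + n') (r.2 - rj.2) (toZ N k - toZ N k')‖) ^ 2 :=
          pow_le_pow_left₀ (norm_nonneg _) hb 2
      _ = _ := by ring
  -- Step 3: sum of ‖S‖² over the difference grid
  have hSsum : ∑ k : Idx N, ∑ k' : Idx N,
      ‖Sfun N (n + n') (r.2 - rj.2) (toZ N k - toZ N k')‖ ^ 2
      ≤ Lr N * (Lr N * (Lr N * (3 * W ^ (n + n')) ^ 2)) := by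
    have hper : ∀ q : ℤ, ‖Sfun N (n + n') (r.2 - rj.2) (q + (2 * N + 1 : ℤ))‖ ^ 2
        = ‖Sfun N (n + n') (r.2 - rj.2) q‖ ^ 2 := fun q => by rw [Sfun_periodic]
    have hcard : ((Finset.univ : Finset (Idx N)).card : ℝ) = Lr N := by
      rw [Finset.card_univ, Fintype.card_fin, Lr]
      push_cast
      ring
    calc ∑ k : Idx N, ∑ k' : Idx N,
          ‖Sfun N (n + n') (r.2 - rj.2) (toZ N k - toZ N k')‖ ^ 2
        = ∑ k : Idx N, ∑ k' : Idx N, ‖Sfun N (n + n') (r.2 - rj.2) (toZ N k')‖ ^ 2 :=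
          Finset.sum_congr rfl fun k _ =>
            sum_shift' N (fun q => ‖Sfun N (n + n') (r.2 - rj.2) q‖ ^ 2) hper (toZ N k)
      _ = ∑ k : Idx N, Lr N * ∑ p : Idx N, ‖Pvec N (n + n') (r.2 - rj.2) p‖ ^ 2 :=
          Finset.sum_congr rfl fun k _ => Sfun_sq_sum N (n + n') (r.2 - rj.2)
      _ ≤ ∑ k : Idx N, Lr N * ∑ p : Idx N, (3 * W ^ (n + n')) ^ 2 := by
          apply Finset.sum_le_sum
          intro k _
          apply mul_le_mul_of_nonneg_left ?_ hLpos.le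
          apply Finset.sum_le_sum
          intro p _
          exact pow_le_pow_left₀ (norm_nonneg _) (norm_Pvec_le N (n + n') (r.2 - rj.2) p) 2
      _ = Lr N * (Lr N * (Lr N * (3 * W ^ (n + n')) ^ 2)) := by
          rw [Finset.sum_const, Finset.sum_const, nsmul_eq_mul, nsmul_eq_mul, hcard]
  -- Step 4: numeric assembly
  have hLT : Lr N ≤ 4 * Tnum N := by
    rw [Lr, Tnum]
    push_cast
    linarith
  have h4 : (Lr N) ^ 4 ≤ 256 * (Tnum N) ^ 4 := by
    calc (Lr N) ^ 4 ≤ (4 * Tnum N) ^ 4 := pow_le_pow_left₀ hLpos.le hLT 4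
      _ = 256 * (Tnum N) ^ 4 := by ring
  have main2 : ∑ l : Idx N, ∑ l' : Idx N, ‖Rmat N m n m' n' r rj l l'‖ ^ 2
      ≤ 20736 / Lr N * (W ^ w) ^ 2 := by
    rw [hfrob2]
    have hsum1 : ∑ k : Idx N, ∑ k' : Idx N, ‖Cmat N m n m' n' r rj k k'‖ ^ 2
        ≤ ((Lr N)⁻¹ * ((Tnum N) ^ 2)⁻¹ * W ^ m' * (3 * W ^ m)) ^ 2 *
          (Lr N * (Lr N * (Lr N * (3 * W ^ (n + n')) ^ 2))) := by
      calc ∑ k : Idx N, ∑ k' : Idx N, ‖Cmat N m n m' n' r rj k k'‖ ^ 2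
          ≤ ∑ k : Idx N, ∑ k' : Idx N,
              ((Lr N)⁻¹ * ((Tnum N) ^ 2)⁻¹ * W ^ m' * (3 * W ^ m)) ^ 2 *
              ‖Sfun N (n + n') (r.2 - rj.2) (toZ N k - toZ N k')‖ ^ 2 :=
            Finset.sum_le_sum fun k _ => Finset.sum_le_sum fun k' _ => hCbound k k'
        _ = ((Lr N)⁻¹ * ((Tnum N) ^ 2)⁻¹ * W ^ m' * (3 * W ^ m)) ^ 2 *
              ∑ k : Idx N, ∑ k' : Idx N,
              ‖Sfun N (n + n') (r.2 - rj.2) (toZ N k - toZ N k')‖ ^ 2 := by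
            simp only [← Finset.mul_sum]
        _ ≤ _ := mul_le_mul_of_nonneg_left hSsum (by positivity)
    have hsum2 : Lr N * (Lr N * (((Lr N)⁻¹ * ((Tnum N) ^ 2)⁻¹ * W ^ m' * (3 * W ^ m)) ^ 2 *
          (Lr N * (Lr N * (Lr N * (3 * W ^ (n + n')) ^ 2)))))
        = 81 * (Lr N) ^ 3 / (Tnum N) ^ 4 * (W ^ m' * W ^ m * W ^ (n + n')) ^ 2 := by
      field_simp
      ring
    have hpow : (W ^ m' * W ^ m * W ^ (n + n')) ^ 2 = (W ^ w) ^ 2 := by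
      rw [hw, ← pow_add, ← pow_add]
      congr 2
      omega
    calc Lr N * (Lr N * ∑ k : Idx N, ∑ k' : Idx N, ‖Cmat N m n m' n' r rj k k'‖ ^ 2)
        ≤ Lr N * (Lr N * (((Lr N)⁻¹ * ((Tnum N) ^ 2)⁻¹ * W ^ m' * (3 * W ^ m)) ^ 2 *
            (Lr N * (Lr N * (Lr N * (3 * W ^ (n + n')) ^ 2))))) := by
          apply mul_le_mul_of_nonneg_left ?_ hLpos.le
          exact mul_le_mul_of_nonneg_left hsum1 hLpos.le
      _ = 81 * (Lr N) ^ 3 / (Tnum N) ^ 4 * (W ^ w) ^ 2 := by rw [hsum2, hpow]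
      _ ≤ 20736 / Lr N * (W ^ w) ^ 2 := by
          rw [div_mul_eq_mul_div, div_mul_eq_mul_div,
            div_le_div_iff₀ (by positivity) hLpos]
          have hQ : 0 ≤ (W ^ w) ^ 2 := by positivity
          nlinarith [mul_le_mul_of_nonneg_right h4 hQ, hQ, hLpos, hTpos,
            pow_pos hTpos 4, pow_pos hLpos 3]
  -- Step 5: conclude
  unfold frobNorm
  have hrhs : 0 ≤ 144 / Real.sqrt (Lr N) * W ^ w := by positivity
  have hsq : (144 / Real.sqrt (Lr N) * W ^ w) ^ 2 = 20736 / Lr N * (W ^ w) ^ 2 := by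
    rw [mul_pow, div_pow, Real.sq_sqrt hLpos.le]
    norm_num
  calc Real.sqrt (∑ l : Idx N, ∑ l' : Idx N, ‖Rmat N m n m' n' r rj l l'‖ ^ 2)
      ≤ Real.sqrt ((144 / Real.sqrt (Lr N) * W ^ w) ^ 2) :=
        Real.sqrt_le_sqrt (by rw [hsq]; exact main2)
    _ = 144 / Real.sqrt (Lr N) * W ^ w := Real.sqrt_sq hrhs


end Blind2D
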